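/- arXiv:2511.20438 — 2 statements merged into one kernel-verified Lean document; each statement's English description precedes it below -/
import Mathlib

section
/- Let Λ ⊆ ℝ^d be separated and suppose the translates Λₙ = Λ − xₙ converge weakly to Γ. Let r > 0 be such that Γ has no points on the boundary sphere ∂B_r(0). Then there exist n₀, k ∈ ℕ such that for every n ≥ n₀ the sets Λₙ ∩ B_r(0) and Γ ∩ B_r(0) each have exactly k elements, and these can be enumerated as μₙ^{(1)},…,μₙ^{(k)} and γ^{(1)},…,γ^{(k)} respectively, with μₙ^{(j)} → γ^{(j)} as n → ∞ for each 1 ≤ j ≤ k. -/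
open MeasureTheory Filter Metric Complex
open scoped ENNReal InnerProductSpace ComplexConjugate

noncomputable section

abbrev Euc (d : ℕ) := EuclideanSpace ℝ (Fin d)

variable {d : ℕ}

/-- The exponential function `e_λ(t) = e^{2πi λ·t}`. -/
def expFn (l t : Euc d) : ℂ := Complex.exp (((2 * Real.pi * ⟪l, t⟫_ℝ : ℝ) : ℂ) * Complex.I)

lemma expFn_continuous (l : Euc d) : Continuous (expFn l) :=
  Complex.continuous_exp.comp <|
    (Complex.continuous_ofReal.comp (continuous_const.mul (continuous_const.inner continuous_id))).mul
      continuous_const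

lemma expFn_norm (l t : Euc d) : ‖expFn l t‖ = 1 := by
  rw [expFn, Complex.norm_exp_ofReal_mul_I]

lemma expFn_memLp (S : Set (Euc d)) (hS : volume S ≠ ⊤) (l : Euc d) :
    MemLp (expFn l) 2 (volume.restrict S) := by
  haveI : IsFiniteMeasure (volume.restrict S) :=
    ⟨by simpa [Measure.restrict_apply_univ] using lt_top_iff_ne_top.2 hS⟩
  refine MemLp.of_bound ((expFn_continuous l).aestronglyMeasurable) 1 ?_
  filter_upwards with t using le_of_eq (expFn_norm l t)

/-- `e_λ` as an element of `L²(S)`. -/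
def expLp (S : Set (Euc d)) (hS : volume S ≠ ⊤) (l : Euc d) :
    Lp ℂ 2 (volume.restrict S) := (expFn_memLp S hS l).toLp _

/-- Pointwise multiplication by `e_x` (modulation) as a map on `L²(S)`. -/
def modLp (S : Set (Euc d)) (_hS : volume S ≠ ⊤) (x : Euc d)
    (f : Lp ℂ 2 (volume.restrict S)) : Lp ℂ 2 (volume.restrict S) :=
  MemLp.toLp (fun t => expFn x t * f t) <| by
    refine MemLp.of_le (Lp.memLp f)
      (((expFn_continuous x).aestronglyMeasurable).mul (Lp.aestronglyMeasurable f)) ?_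
    filter_upwards with t using le_of_eq (by rw [norm_mul, expFn_norm, one_mul])

/-- The translate `Λ - x` of a point set. -/
def setTrans (Λ : Set (Euc d)) (x : Euc d) : Set (Euc d) := (fun l => l - x) '' Λ

/-- Weak convergence of point sets in Beurling's sense. -/
def WeakLim (Λn : ℕ → Set (Euc d)) (Γ : Set (Euc d)) : Prop :=
  (∀ γ ∈ Γ, ∃ u : ℕ → Euc d, (∀ n, u n ∈ Λn n) ∧ Tendsto u atTop (nhds γ)) ∧
  (∀ φ : ℕ → ℕ, StrictMono φ → ∀ u : ℕ → Euc d, (∀ k, u k ∈ Λn (φ k)) →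
    ∀ γ : Euc d, Tendsto u atTop (nhds γ) → γ ∈ Γ)

/-- `Γ` is a weak limit of translates of `Λ`. -/
def InHull (Λ Γ : Set (Euc d)) : Prop :=
  ∃ x : ℕ → Euc d, WeakLim (fun n => setTrans Λ (x n)) Γ

/-- `Λ` is separated. -/
def IsSeparated (Λ : Set (Euc d)) : Prop :=
  ∃ s > (0:ℝ), ∀ l ∈ Λ, ∀ m ∈ Λ, l ≠ m → s ≤ dist l m

/-- The separation constant `Sep(Λ)`. -/
def sepConst (Λ : Set (Euc d)) : ℝ≥0∞ :=
  ⨅ (l : Λ) (m : Λ) (_ : (l : Euc d) ≠ (m : Euc d)), edist (l : Euc d) (m : Euc d)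

/-- Upper Beurling density. -/
def upperDensity (Λ : Set (Euc d)) : ℝ≥0∞ :=
  Filter.limsup (fun r : ℝ =>
    ⨆ x : Euc d, ((Λ ∩ ball x r).ncard : ℝ≥0∞) / volume (ball (0 : Euc d) r)) atTop

/-- Lower Beurling density. -/
def lowerDensity (Λ : Set (Euc d)) : ℝ≥0∞ :=
  Filter.liminf (fun r : ℝ =>
    ⨅ x : Euc d, ((Λ ∩ ball x r).ncard : ℝ≥0∞) / volume (ball (0 : Euc d) r)) atTop

/-- Frame inequalities for `E(Λ)` in `L²(S)`. -/
def IsFrame (S : Set (Euc d)) (hS : volume S ≠ ⊤) (Λ : Set (Euc d)) (A B : ℝ) : Prop :=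
  ∀ f : Lp ℂ 2 (volume.restrict S),
    A * ‖f‖ ^ 2 ≤ ∑' l : Λ, ‖⟪expLp S hS (l : Euc d), f⟫_ℂ‖ ^ 2 ∧
    ∑' l : Λ, ‖⟪expLp S hS (l : Euc d), f⟫_ℂ‖ ^ 2 ≤ B * ‖f‖ ^ 2

/-- Bessel inequality for `E(Λ)` in `L²(S)`. -/
def IsBessel (S : Set (Euc d)) (hS : volume S ≠ ⊤) (Λ : Set (Euc d)) (B : ℝ) : Prop :=
  ∀ f : Lp ℂ 2 (volume.restrict S),
    ∑' l : Λ, ‖⟪expLp S hS (l : Euc d), f⟫_ℂ‖ ^ 2 ≤ B * ‖f‖ ^ 2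

/-- The frame operator `S_Λ`. -/
def frameOp (S : Set (Euc d)) (hS : volume S ≠ ⊤) (Λ : Set (Euc d))
    (f : Lp ℂ 2 (volume.restrict S)) : Lp ℂ 2 (volume.restrict S) :=
  ∑' l : Λ, ⟪expLp S hS (l : Euc d), f⟫_ℂ • expLp S hS (l : Euc d)

/-- Riesz sequence inequalities for `E(Λ)` in `L²(S)`. -/
def IsRieszSeq (S : Set (Euc d)) (hS : volume S ≠ ⊤) (Λ : Set (Euc d)) (A B : ℝ) : Prop :=
  ∀ c : Λ →₀ ℂ,
    A * ∑ l ∈ c.support, ‖c l‖ ^ 2 ≤ ‖∑ l ∈ c.support, c l • expLp S hS (l : Euc d)‖ ^ 2 ∧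
    ‖∑ l ∈ c.support, c l • expLp S hS (l : Euc d)‖ ^ 2 ≤ B * ∑ l ∈ c.support, ‖c l‖ ^ 2

/-- Closed linear span of `E(Λ)` in `L²(S)`. -/
def spanExp (S : Set (Euc d)) (hS : volume S ≠ ⊤) (Λ : Set (Euc d)) :
    Submodule ℂ (Lp ℂ 2 (volume.restrict S)) :=
  (Submodule.span ℂ (expLp S hS '' Λ)).topologicalClosure

/-- Orthogonal projection onto the closed span of `E(Λ)`. -/
def projExp (S : Set (Euc d)) (hS : volume S ≠ ⊤) (Λ : Set (Euc d))
    (f : Lp ℂ 2 (volume.restrict S)) : Lp ℂ 2 (volume.restrict S) :=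
  haveI : CompleteSpace (spanExp S hS Λ) :=
    (Submodule.isClosed_topologicalClosure _).completeSpace_coe
  ((spanExp S hS Λ).orthogonalProjectionOnto f : Lp ℂ 2 (volume.restrict S))

/-- `E(Λ)` is a Riesz basis for `L²(S)`. -/
def IsRieszBasis (S : Set (Euc d)) (hS : volume S ≠ ⊤) (Λ : Set (Euc d)) : Prop :=
  (∃ A B : ℝ, 0 < A ∧ A ≤ B ∧ IsRieszSeq S hS Λ A B) ∧ spanExp S hS Λ = ⊤


lemma sep_finite_of_bounded {d : ℕ} {s : ℝ} (hs : 0 < s) (S : Set (Euc d))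
    (hsep : ∀ a ∈ S, ∀ b ∈ S, a ≠ b → s ≤ dist a b) (R : ℝ)
    (hS : S ⊆ closedBall (0 : Euc d) R) : S.Finite := by
  by_contra hinf'
  have hinf : S.Infinite := hinf'
  set u : ℕ → Euc d := fun n => ((Set.Infinite.natEmbedding S hinf) n : Euc d) with hu_def
  have hu : ∀ n, u n ∈ closedBall (0 : Euc d) R := fun n => hS ((Set.Infinite.natEmbedding S hinf) n).2
  obtain ⟨w, -, φ, hφ, hconv⟩ := (isCompact_closedBall (0 : Euc d) R).tendsto_subseq hu
  have hc : CauchySeq (u ∘ φ) := hconv.cauchySeq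
  rw [Metric.cauchySeq_iff] at hc
  obtain ⟨N, hN⟩ := hc s hs
  have h1 := hN (N + 1) (by omega) N (by omega)
  have hne : u (φ (N + 1)) ≠ u (φ N) := by
    intro he
    have h2 : (Set.Infinite.natEmbedding S hinf) (φ (N + 1)) = (Set.Infinite.natEmbedding S hinf) (φ N) := Subtype.ext he
    have := (Set.Infinite.natEmbedding S hinf).injective h2
    exact (hφ (Nat.lt_succ_self N)).ne' this
  exact absurd h1 (not_lt.2 (hsep _ ((Set.Infinite.natEmbedding S hinf) (φ (N+1))).2 _
    ((Set.Infinite.natEmbedding S hinf) (φ N)).2 hne))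

theorem stmt2 {d : ℕ} (Λ : Set (Euc d)) (hΛ : IsSeparated Λ)
    (x : ℕ → Euc d) (Γ : Set (Euc d))
    (h : WeakLim (fun n => setTrans Λ (x n)) Γ)
    (r : ℝ) (hr : 0 < r) (hbd : ∀ γ ∈ Γ, dist γ (0 : Euc d) ≠ r) :
    ∃ (n₀ k : ℕ) (μ : ℕ → Fin k → Euc d) (γ : Fin k → Euc d),
      Function.Injective γ ∧ Γ ∩ ball (0 : Euc d) r = Set.range γ ∧
      (∀ n ≥ n₀, Function.Injective (μ n) ∧
        setTrans Λ (x n) ∩ ball (0 : Euc d) r = Set.range (μ n)) ∧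
      (∀ j : Fin k, Tendsto (fun n => μ n j) atTop (nhds (γ j))) := by
  classical
  obtain ⟨s, hs, hsep⟩ := hΛ
  set Λn : ℕ → Set (Euc d) := fun n => setTrans Λ (x n) with hΛn
  -- each translate is separated
  have hsepn : ∀ n, ∀ a ∈ Λn n, ∀ b ∈ Λn n, a ≠ b → s ≤ dist a b := by
    rintro n a ⟨la, hla, rfl⟩ b ⟨lb, hlb, rfl⟩ hab
    rw [dist_sub_right]
    exact hsep la hla lb hlb (fun he => hab (by rw [he]))
  -- Γ is separated
  have hΓsep : ∀ a ∈ Γ, ∀ b ∈ Γ, a ≠ b → s ≤ dist a b := by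
    intro a ha b hb hab
    obtain ⟨u, hu, huc⟩ := h.1 a ha
    obtain ⟨v, hv, hvc⟩ := h.1 b hb
    have hd : Tendsto (fun n => dist (u n) (v n)) atTop (nhds (dist a b)) := huc.dist hvc
    have hev : ∀ᶠ n in atTop, 0 < dist (u n) (v n) :=
      hd.eventually (eventually_gt_nhds (dist_pos.2 hab))
    refine ge_of_tendsto hd ?_
    filter_upwards [hev] with n hn
    exact hsepn n _ (hu n) _ (hv n) (dist_pos.1 hn)
  have hfin : (Γ ∩ ball (0 : Euc d) r).Finite := by
    refine sep_finite_of_bounded hs _ ?_ r ?_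
    · intro a ha b hb hab; exact hΓsep a ha.1 b hb.1 hab
    · exact fun y hy => ball_subset_closedBall hy.2
  set k := hfin.toFinset.card with hk
  set e := hfin.toFinset.equivFin with he
  set γ : Fin k → Euc d := fun j => ((e.symm j : hfin.toFinset) : Euc d) with hγ
  have hγinj : Function.Injective γ := by
    intro i j hij
    exact e.symm.injective (Subtype.ext hij)
  have hrange : Set.range γ = Γ ∩ ball (0 : Euc d) r := by
    rw [← hfin.coe_toFinset]
    ext y
    constructor
    · rintro ⟨j, rfl⟩; exact (e.symm j).2
    · intro hy; exact ⟨e ⟨y, hy⟩, by simp [hγ]⟩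
  have hγmem : ∀ j, γ j ∈ Γ ∩ ball (0 : Euc d) r := by
    intro j; rw [← hrange]; exact Set.mem_range_self j
  -- choose sequences converging to each γ j
  have hseq : ∀ j : Fin k, ∃ u : ℕ → Euc d, (∀ n, u n ∈ Λn n) ∧
      Tendsto u atTop (nhds (γ j)) := fun j => h.1 (γ j) (hγmem j).1
  choose uf humem huconv using hseq
  set μ : ℕ → Fin k → Euc d := fun n j => uf j n with hμ
  -- eventual closeness
  have hev1 : ∀ᶠ n in atTop, ∀ j, dist (μ n j) (γ j) < s / 2 := by
    rw [eventually_all]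
    intro j
    obtain ⟨N, hN⟩ := Metric.tendsto_atTop.1 (huconv j) (s / 2) (half_pos hs)
    exact Filter.eventually_atTop.2 ⟨N, fun n hn => hN n hn⟩
  have hev2 : ∀ᶠ n in atTop, ∀ j, μ n j ∈ ball (0 : Euc d) r := by
    rw [eventually_all]
    intro j
    exact (huconv j).eventually (isOpen_ball.mem_nhds (hγmem j).2)
  -- key inclusion
  have hev3 : ∀ᶠ n in atTop, ∀ v ∈ Λn n ∩ ball (0 : Euc d) r, v ∈ Set.range (μ n) := by
    by_contra hcon
    rw [Filter.not_eventually] at hcon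
    have hfreq : ∃ᶠ n in atTop, ∃ v, v ∈ Λn n ∩ ball (0 : Euc d) r ∧ v ∉ Set.range (μ n) := by
      refine hcon.mono ?_
      intro n hn
      push_neg at hn
      exact hn
    obtain ⟨φ, hφ, hφP⟩ := Filter.extraction_of_frequently_atTop hfreq
    choose v hvmem hvnot using hφP
    have hvb : ∀ m, v m ∈ closedBall (0 : Euc d) r :=
      fun m => ball_subset_closedBall (hvmem m).2
    obtain ⟨w, hwb, ψ, hψ, hwconv⟩ := (isCompact_closedBall (0 : Euc d) r).tendsto_subseq hvb
    have hwΓ : w ∈ Γ := h.2 (φ ∘ ψ) (hφ.comp hψ) (v ∘ ψ)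
      (fun m => (hvmem (ψ m)).1) w hwconv
    have hwball : w ∈ ball (0 : Euc d) r := by
      rw [mem_ball]
      exact lt_of_le_of_ne (mem_closedBall.1 hwb) (hbd w hwΓ)
    obtain ⟨j, hj⟩ := hrange ▸ (Set.mem_inter hwΓ hwball)
    -- μ (φ (ψ m)) j → γ j = w
    have hμconv : Tendsto (fun m => μ (φ (ψ m)) j) atTop (nhds w) := by
      rw [← hj] at *
      exact (huconv j).comp (hφ.comp hψ).tendsto_atTop
    have hdist : Tendsto (fun m => dist (v (ψ m)) (μ (φ (ψ m)) j)) atTop (nhds 0) := by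
      have := hwconv.dist hμconv
      simpa using this
    have hsmall : ∀ᶠ m in atTop, dist (v (ψ m)) (μ (φ (ψ m)) j) < s :=
      hdist.eventually (eventually_lt_nhds hs)
    obtain ⟨m, hm⟩ := hsmall.exists
    have hne : v (ψ m) ≠ μ (φ (ψ m)) j := by
      intro heq
      exact hvnot (ψ m) (heq ▸ Set.mem_range_self j)
    exact absurd hm (not_lt.2 (hsepn (φ (ψ m)) _ (hvmem (ψ m)).1 _
      (humem j (φ (ψ m))) hne))
  have hev : ∀ᶠ n in atTop, Function.Injective (μ n) ∧
      Λn n ∩ ball (0 : Euc d) r = Set.range (μ n) := by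
    filter_upwards [hev1, hev2, hev3] with n h1 h2 h3
    constructor
    · intro i j hij
      by_contra hne
      have hgne : γ i ≠ γ j := fun he => hne (hγinj he)
      have : s ≤ dist (γ i) (γ j) := hΓsep _ (hγmem i).1 _ (hγmem j).1 hgne
      have hlt : dist (γ i) (γ j) < s := by
        calc dist (γ i) (γ j) ≤ dist (γ i) (μ n i) + dist (μ n i) (γ j) := dist_triangle _ _ _
        _ = dist (μ n i) (γ i) + dist (μ n j) (γ j) := by rw [dist_comm, hij]
        _ < s / 2 + s / 2 := add_lt_add (h1 i) (h1 j)
        _ = s := add_halves s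
      linarith
    · ext y
      constructor
      · intro hy; exact h3 y hy
      · rintro ⟨j, rfl⟩
        exact ⟨humem j n, h2 j⟩
  obtain ⟨n₀, hn₀⟩ := Filter.eventually_atTop.1 hev
  exact ⟨n₀, k, μ, γ, hγinj, hrange.symm, fun n hn => hn₀ n hn,
    fun j => huconv j⟩


end
end

section
/- Let S ⊆ ℝ^d have finite measure, and let Λ ⊆ ℝ^d be separated, relatively dense, and almost repetitive, meaning W(Γ) = W(Λ) for all Γ ∈ W(Λ), where W(Λ) is the set of weak limits of translates of Λ. If E(Λ) is a frame for L²(S) and there exists Γ ∈ W(Λ) such that E(Γ) is a Riesz basis for L²(S), then E(Λ) itself is a Riesz basis for L²(S). -/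
open MeasureTheory Filter Metric Complex
open scoped ENNReal InnerProductSpace ComplexConjugate

set_option maxHeartbeats 1000000

noncomputable section

variable {d : ℕ}

/-! ### Auxiliary lemmas -/

section Aux

variable (S : Set (Euc d)) (hS : volume S ≠ ⊤)

lemma expFn_add (l m t : Euc d) : expFn (l + m) t = expFn l t * expFn m t := by
  rw [expFn, expFn, expFn, ← Complex.exp_add]
  congr 1
  rw [inner_add_left]
  push_cast
  ring

lemma coeFn_sum_expLp {ι : Type} (F : Finset ι) (a : ι → ℂ) (w : ι → Euc d) :
    (((∑ l ∈ F, a l • expLp S hS (w l)) : Lp ℂ 2 (volume.restrict S)) : Euc d → ℂ)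
      =ᵐ[volume.restrict S] fun t => ∑ l ∈ F, a l * expFn (w l) t := by
  classical
  induction F using Finset.induction_on with
  | empty =>
      simp only [Finset.sum_empty]
      filter_upwards [Lp.coeFn_zero ℂ 2 (volume.restrict S)] with t ht using ht
  | @insert i F hi ih =>
      rw [Finset.sum_insert hi]
      have h3' : ((expLp S hS (w i) : Lp ℂ 2 (volume.restrict S)) : Euc d → ℂ)
          =ᵐ[volume.restrict S] expFn (w i) := (expFn_memLp S hS (w i)).coeFn_toLp
      filter_upwards [Lp.coeFn_add (a i • expLp S hS (w i)) (∑ l ∈ F, a l • expLp S hS (w l)),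
        Lp.coeFn_smul (a i) (expLp S hS (w i)), h3', ih] with t h1 h2 h3 h4
      rw [Finset.sum_insert hi, h1, Pi.add_apply, h2, Pi.smul_apply, h4, smul_eq_mul, h3]

lemma norm_sum_expLp {ι : Type} (F : Finset ι) (a : ι → ℂ) (w : ι → Euc d) :
    ‖∑ l ∈ F, a l • expLp S hS (w l)‖
      = (eLpNorm (fun t => ∑ l ∈ F, a l * expFn (w l) t) 2 (volume.restrict S)).toReal := by
  rw [Lp.norm_def]
  congr 1
  exact eLpNorm_congr_ae (coeFn_sum_expLp S hS F a w)

lemma norm_sum_expLp_sub {ι : Type} (F : Finset ι) (a : ι → ℂ) (w : ι → Euc d) (x : Euc d) :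
    ‖∑ l ∈ F, a l • expLp S hS (w l - x)‖ = ‖∑ l ∈ F, a l • expLp S hS (w l)‖ := by
  rw [norm_sum_expLp S hS F a (fun l => w l - x), norm_sum_expLp S hS F a w]
  refine congrArg ENNReal.toReal ?_
  apply eLpNorm_congr_norm_ae
  filter_upwards with t
  have key : ∑ l ∈ F, a l * expFn (w l - x) t
      = (∑ l ∈ F, a l * expFn (w l) t) * expFn (-x) t := by
    rw [Finset.sum_mul]
    refine Finset.sum_congr rfl fun l _ => ?_
    rw [mul_assoc]
    congr 1
    rw [show w l - x = w l + (-x) by abel, expFn_add]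
  rw [key, norm_mul, expFn_norm, mul_one]

/-- Finitary (finset-indexed) form of the Riesz sequence inequalities. -/
def RS (Λ : Set (Euc d)) (A B : ℝ) : Prop :=
  ∀ (F : Finset (Euc d)) (v : Euc d → Euc d), Set.InjOn v F → (∀ l ∈ F, v l ∈ Λ) →
    ∀ a : Euc d → ℂ,
      A * ∑ l ∈ F, ‖a l‖ ^ 2 ≤ ‖∑ l ∈ F, a l • expLp S hS (v l)‖ ^ 2 ∧
      ‖∑ l ∈ F, a l • expLp S hS (v l)‖ ^ 2 ≤ B * ∑ l ∈ F, ‖a l‖ ^ 2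

lemma key_sum {α β : Type} [Fintype α] (e : α ↪ β) (f₀ : α →₀ ℂ) {N : Type}
    [AddCommMonoid N] (g : β → ℂ → N) (hg : ∀ b, g b 0 = 0) :
    ∑ b ∈ (f₀.embDomain e).support, g b ((f₀.embDomain e) b) = ∑ a : α, g (e a) (f₀ a) := by
  rw [Finsupp.support_embDomain,
    Finset.sum_map f₀.support e (fun b => g b ((f₀.embDomain e) b))]
  simp only [Finsupp.embDomain_apply_self]
  refine Finset.sum_subset (f := fun x => g (e x) (f₀ x)) (Finset.subset_univ f₀.support)
    ?_
  intro x _ hx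
  show g (e x) (f₀ x) = 0
  rw [Finsupp.notMem_support_iff.mp hx, hg]

lemma riesz_to_RS {Λ : Set (Euc d)} {A B : ℝ} (hR : IsRieszSeq S hS Λ A B) :
    RS S hS Λ A B := by
  intro F v hv hvΛ a
  classical
  set e : {l // l ∈ F} ↪ {m // m ∈ Λ} :=
    ⟨fun l => ⟨v ↑l, hvΛ ↑l l.2⟩, by
      rintro ⟨y, hy⟩ ⟨z, hz⟩ h
      exact Subtype.ext (hv hy hz (congrArg Subtype.val h))⟩ with he
  set a₀ : {l // l ∈ F} →₀ ℂ := Finsupp.equivFunOnFinite.symm (fun l => a ↑l) with ha₀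
  have ha₀' : ∀ l, a₀ l = a ↑l := fun l => rfl
  set c : {m // m ∈ Λ} →₀ ℂ := a₀.embDomain e with hc
  have h := hR c
  have hcoeff : ∑ γ ∈ c.support, ‖c γ‖ ^ 2 = ∑ l ∈ F, ‖a l‖ ^ 2 := by
    rw [hc, key_sum e a₀ (fun m z => ‖z‖ ^ 2) (fun b => by simp)]
    simp only [ha₀']
    exact Finset.sum_coe_sort F (fun l => ‖a l‖ ^ 2)
  have hvec : ∑ γ ∈ c.support, c γ • expLp S hS (γ : Euc d)
      = ∑ l ∈ F, a l • expLp S hS (v l) := by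
    rw [hc, key_sum e a₀ (fun m z => z • expLp S hS (m : Euc d)) (fun b => zero_smul ℂ _)]
    simp only [ha₀']
    exact Finset.sum_coe_sort F (fun l => a l • expLp S hS (v l))
  rw [hcoeff, hvec] at h
  exact h

lemma riesz_of_RS {Λ : Set (Euc d)} {A B : ℝ} (hRS : RS S hS Λ A B) :
    IsRieszSeq S hS Λ A B := by
  intro c
  classical
  set a : Euc d → ℂ := fun m => if h : m ∈ Λ then c ⟨m, h⟩ else 0 with ha
  have hFΛ : ∀ l ∈ c.support.image Subtype.val, id l ∈ Λ := by
    intro l hl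
    obtain ⟨γ, _, rfl⟩ := Finset.mem_image.mp hl
    exact γ.2
  have h := hRS (c.support.image Subtype.val) id (fun y _ z _ hh => hh) hFΛ a
  have hval : ∀ γ ∈ c.support, a (γ : Euc d) = c γ := by
    intro γ _
    simp only [ha]
    rw [dif_pos γ.2]
  have hiinj : ∀ γ ∈ c.support, ∀ δ ∈ c.support, (γ : Euc d) = (δ : Euc d) → γ = δ :=
    fun γ _ δ _ hh => Subtype.ext hh
  have e1 : ∑ l ∈ c.support.image Subtype.val, ‖a l‖ ^ 2 = ∑ γ ∈ c.support, ‖c γ‖ ^ 2 :=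
    (Finset.sum_image hiinj).trans
      (Finset.sum_congr rfl fun γ hγ => by rw [hval γ hγ])
  have e2 : ∑ l ∈ c.support.image Subtype.val, a l • expLp S hS (id l)
      = ∑ γ ∈ c.support, c γ • expLp S hS (γ : Euc d) :=
    (Finset.sum_image hiinj).trans
      (Finset.sum_congr rfl fun γ hγ =>
        congrArg (fun z : ℂ => z • expLp S hS (γ : Euc d)) (hval γ hγ))
  have hpow := congrArg (fun v : Lp ℂ 2 (volume.restrict S) => ‖v‖ ^ 2) e2
  refine ⟨?_, ?_⟩
  · rw [← e1, ← hpow]; exact h.1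
  · rw [← e1, ← hpow]; exact h.2

lemma RS_setTrans {Γ : Set (Euc d)} {A B : ℝ} (hRS : RS S hS Γ A B) (x : Euc d) :
    RS S hS (setTrans Γ x) A B := by
  intro F v hv hvm a
  have hmem : ∀ l ∈ F, v l + x ∈ Γ := by
    intro l hl
    obtain ⟨γ, hγ, hev⟩ := hvm l hl
    have hev' : γ - x = v l := hev
    have : v l + x = γ := by rw [← hev']; abel
    rwa [this]
  have hinj : Set.InjOn (fun l => v l + x) F := by
    intro y hy z hz hh
    have hh' : v y + x = v z + x := hh
    exact hv hy hz (add_right_cancel hh')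
  have h := hRS F (fun l => v l + x) hinj hmem a
  have hkey := norm_sum_expLp_sub S hS F a (fun l => v l + x) x
  have hs : (∑ l ∈ F, a l • expLp S hS (v l + x - x)) = ∑ l ∈ F, a l • expLp S hS (v l) :=
    Finset.sum_congr rfl fun l _ => by rw [add_sub_cancel_right]
  have hnorm : ‖∑ l ∈ F, a l • expLp S hS (v l)‖
      = ‖∑ l ∈ F, a l • expLp S hS (v l + x)‖ :=
    (congrArg norm hs).symm.trans hkey
  have hpow := congrArg (fun r : ℝ => r ^ 2) hnorm
  refine ⟨?_, ?_⟩
  · rw [hpow]; exact h.1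
  · rw [hpow]; exact h.2

lemma expLp_tendsto (u : ℕ → Euc d) (l : Euc d) (hu : Tendsto u atTop (nhds l)) :
    Tendsto (fun n => expLp S hS (u n)) atTop (nhds (expLp S hS l)) := by
  haveI : IsFiniteMeasure (volume.restrict S) :=
    ⟨by simpa [Measure.restrict_apply_univ] using lt_top_iff_ne_top.2 hS⟩
  have hsm : ∀ y : Euc d, StronglyMeasurable (expFn (d := d) y) :=
    fun y => (expFn_continuous y).stronglyMeasurable
  have hui : UnifIntegrable (fun n => expFn (u n)) 2 (volume.restrict S) := by
    refine unifIntegrable_of one_le_two ENNReal.ofNat_ne_top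
      (fun n => (hsm _).aestronglyMeasurable) (fun ε hε => ⟨(2 : NNReal), fun i => ?_⟩)
    have hempty : { t : Euc d | (2 : NNReal) ≤ ‖expFn (u i) t‖₊ } = ∅ := by
      ext t
      simp only [Set.mem_setOf_eq, Set.mem_empty_iff_false, iff_false, not_le]
      rw [← NNReal.coe_lt_coe, coe_nnnorm, expFn_norm]
      norm_num
    rw [hempty]
    simp [eLpNorm_zero, hε.le]
  have hptw : ∀ t : Euc d, Tendsto (fun n => expFn (u n) t) atTop (nhds (expFn l t)) := by
    intro t
    have hcont : Continuous fun y : Euc d => expFn y t :=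
      Complex.continuous_exp.comp <|
        (Complex.continuous_ofReal.comp
          (continuous_const.mul ((continuous_id : Continuous (id : Euc d → Euc d)).inner continuous_const))).mul
          continuous_const
    exact (hcont.tendsto l).comp hu
  have htends : Tendsto (fun n => eLpNorm (expFn (u n) - expFn l) 2 (volume.restrict S))
      atTop (nhds 0) :=
    tendsto_Lp_finite_of_tendsto_ae one_le_two ENNReal.ofNat_ne_top
      (fun n => (hsm _).aestronglyMeasurable) (expFn_memLp S hS l) hui
      (Filter.Eventually.of_forall hptw)
  rw [tendsto_iff_norm_sub_tendsto_zero]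
  have heq : ∀ n, ‖expLp S hS (u n) - expLp S hS l‖
      = (eLpNorm (expFn (u n) - expFn l) 2 (volume.restrict S)).toReal := by
    intro n
    rw [show expLp S hS (u n) - expLp S hS l
        = ((expFn_memLp S hS (u n)).sub (expFn_memLp S hS l)).toLp (expFn (u n) - expFn l)
        from (MemLp.toLp_sub _ _).symm]
    exact Lp.norm_toLp _ _
  simp only [heq]
  have := (ENNReal.tendsto_toReal (a := 0) (by simp)).comp htends
  exact this

lemma mem_of_separated {Λ : Set (Euc d)} (hsep : IsSeparated Λ) {u : ℕ → Euc d}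
    (hu : ∀ n, u n ∈ Λ) {γ : Euc d} (h : Tendsto u atTop (nhds γ)) : γ ∈ Λ := by
  obtain ⟨s, hs, hsp⟩ := hsep
  obtain ⟨N, hN⟩ := Metric.tendsto_atTop.mp h (s / 2) (by linarith)
  have hconst : ∀ n ≥ N, u n = u N := by
    intro n hn
    by_contra hne
    have h1 := hN n hn
    have h2 := hN N le_rfl
    have ht : dist (u n) (u N) ≤ dist (u n) γ + dist γ (u N) := dist_triangle _ _ _
    rw [dist_comm γ (u N)] at ht
    linarith [hsp _ (hu n) _ (hu N) hne]
  have hlim2 : Tendsto u atTop (nhds (u N)) := by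
    refine Tendsto.congr' ?_ tendsto_const_nhds
    filter_upwards [Filter.eventually_ge_atTop N] with n hn
    exact (hconst n hn).symm
  rw [tendsto_nhds_unique h hlim2]
  exact hu N

lemma inHull_self {Λ : Set (Euc d)} (hsep : IsSeparated Λ) : InHull Λ Λ := by
  have hT : setTrans Λ (0 : Euc d) = Λ := by
    ext m
    simp [setTrans]
  refine ⟨fun _ => (0 : Euc d), ?_, ?_⟩
  · intro γ hγ
    refine ⟨fun _ => γ, fun n => ?_, tendsto_const_nhds⟩
    show γ ∈ setTrans Λ (0 : Euc d)
    rw [hT]; exact hγ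
  · intro φ hφ u hu γ hγlim
    refine mem_of_separated hsep (fun k => ?_) hγlim
    have h := hu k
    simp only at h
    rwa [hT] at h

lemma span_top_of_frame {Λ : Set (Euc d)} {A B : ℝ} (hA : 0 < A)
    (hfr : IsFrame S hS Λ A B) : spanExp S hS Λ = ⊤ := by
  haveI : CompleteSpace (spanExp S hS Λ) :=
    (Submodule.isClosed_topologicalClosure _).completeSpace_coe
  rw [← Submodule.orthogonal_eq_bot_iff, Submodule.eq_bot_iff]
  intro f hf
  have hzero : ∀ γ : Λ, ⟪expLp S hS (γ : Euc d), f⟫_ℂ = 0 := by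
    intro γ
    exact (Submodule.mem_orthogonal _ f).mp hf _
      (Submodule.le_topologicalClosure _ (Submodule.subset_span ⟨↑γ, γ.2, rfl⟩))
  have h1 := (hfr f).1
  have hzsum : ∑' l : Λ, ‖⟪expLp S hS (l : Euc d), f⟫_ℂ‖ ^ 2 = 0 := by
    rw [tsum_congr (fun l : Λ => by rw [hzero l]; simp : ∀ l : Λ,
      ‖⟪expLp S hS (l : Euc d), f⟫_ℂ‖ ^ 2 = 0)]
    exact tsum_zero
  rw [hzsum] at h1
  by_contra hne
  have hpos : 0 < ‖f‖ := norm_pos_iff.mpr hne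
  exact absurd h1 (not_le.mpr (mul_pos hA (pow_pos hpos 2)))

lemma RS_of_inHull {Γ Λ : Set (Euc d)} {A B : ℝ} (hRS : RS S hS Γ A B)
    (hhull : InHull Γ Λ) : RS S hS Λ A B := by
  obtain ⟨x, h1, _⟩ := hhull
  choose! uu huu1 huu2 using h1
  intro F v hv hvΛ a
  have hu_mem : ∀ l ∈ F, ∀ n, uu (v l) n ∈ setTrans Γ (x n) :=
    fun l hl n => huu1 (v l) (hvΛ l hl) n
  have hu_lim : ∀ l ∈ F, Tendsto (uu (v l)) atTop (nhds (v l)) :=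
    fun l hl => huu2 (v l) (hvΛ l hl)
  have hev : ∀ᶠ n in atTop, ∀ p ∈ F ×ˢ F, p.1 ≠ p.2 → uu (v p.1) n ≠ uu (v p.2) n := by
    rw [Filter.eventually_all_finset]
    rintro ⟨l, m⟩ hp
    rw [Finset.mem_product] at hp
    by_cases hpe : l = m
    · exact Filter.Eventually.of_forall (fun n hne => absurd hpe hne)
    · have hvne : v l ≠ v m := fun hvv => hpe (hv hp.1 hp.2 hvv)
      have hD : 0 < dist (v l) (v m) := dist_pos.mpr hvne
      have hb2 : ∀ᶠ n in atTop, dist (uu (v m) n) (v m) < dist (v l) (v m) / 2 := by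
        obtain ⟨N, hN⟩ := Metric.tendsto_atTop.mp (hu_lim m hp.2) _ (by linarith : 
          (0:ℝ) < dist (v l) (v m) / 2)
        filter_upwards [Filter.eventually_ge_atTop N] with n hn
        exact hN n hn
      have hb1' : ∀ᶠ n in atTop, dist (uu (v l) n) (v l) < dist (v l) (v m) / 2 := by
        obtain ⟨N, hN⟩ := Metric.tendsto_atTop.mp (hu_lim l hp.1) _ (by linarith :
          (0:ℝ) < dist (v l) (v m) / 2)
        filter_upwards [Filter.eventually_ge_atTop N] with n hn
        exact hN n hn
      filter_upwards [hb1', hb2] with n hn1 hn2 _ heq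
      rw [heq] at hn1
      have ht : dist (v l) (v m) ≤ dist (v l) (uu (v m) n) + dist (uu (v m) n) (v m) :=
        dist_triangle _ _ _
      rw [dist_comm (v l) (uu (v m) n)] at ht
      linarith
  set T := ∑ l ∈ F, ‖a l‖ ^ 2 with hT
  set Q := ‖∑ l ∈ F, a l • expLp S hS (v l)‖ ^ 2 with hQ
  have hq : Tendsto (fun n => ‖∑ l ∈ F, a l • expLp S hS (uu (v l) n)‖ ^ 2) atTop (nhds Q) := by
    apply Tendsto.pow
    apply Tendsto.norm
    apply tendsto_finset_sum
    intro l hl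
    exact (expLp_tendsto S hS _ _ (hu_lim l hl)).const_smul (a l)
  have hineq : ∀ᶠ n in atTop,
      A * T ≤ ‖∑ l ∈ F, a l • expLp S hS (uu (v l) n)‖ ^ 2 ∧
      ‖∑ l ∈ F, a l • expLp S hS (uu (v l) n)‖ ^ 2 ≤ B * T := by
    filter_upwards [hev] with n hn
    have hinj : Set.InjOn (fun l => uu (v l) n) F := by
      intro y hy z hz hh
      by_contra hne
      exact hn (y, z) (Finset.mem_product.mpr ⟨hy, hz⟩) hne hh
    exact RS_setTrans S hS hRS (x n) F (fun l => uu (v l) n) hinj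
      (fun l hl => hu_mem l hl n) a
  constructor
  · exact ge_of_tendsto hq (hineq.mono fun n h => h.1)
  · exact le_of_tendsto hq (hineq.mono fun n h => h.2)

end Aux

theorem stmt18 {d : ℕ} (S : Set (Euc d)) (hS : volume S ≠ ⊤) (Λ : Set (Euc d))
    (hsep : IsSeparated Λ)
    (hrd : ∃ R > (0 : ℝ), ∀ x : Euc d, ∃ l ∈ Λ, dist x l < R)
    (hrep : ∀ Γ : Set (Euc d), InHull Λ Γ → ∀ Δ : Set (Euc d), (InHull Γ Δ ↔ InHull Λ Δ))
    (hframe : ∃ A B : ℝ, 0 < A ∧ A ≤ B ∧ IsFrame S hS Λ A B)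
    (hΓ : ∃ Γ : Set (Euc d), InHull Λ Γ ∧ IsRieszBasis S hS Γ) :
    IsRieszBasis S hS Λ := by
  obtain ⟨Af, Bf, hAf, hABf, hfr⟩ := hframe
  obtain ⟨Γ, hΛΓ, ⟨⟨A, B, hA, hAB, hRSΓ⟩, _⟩⟩ := hΓ
  have hΓΛ : InHull Γ Λ := (hrep Γ hΛΓ Λ).mpr (inHull_self hsep)
  have hRS : RS S hS Λ A B :=
    RS_of_inHull S hS (riesz_to_RS S hS hRSΓ) hΓΛ
  exact ⟨⟨A, B, hA, hAB, riesz_of_RS S hS hRS⟩, span_top_of_frame S hS hAf hfr⟩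

end
end
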